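/- Let π be a signed permutation all of whose strips are positive (equivalently, all elements of π have sign '+'). Then: (i) for every reversal ρ, b(π·ρ) ≥ b(π); (ii) for every inverse transposition β, b(π·β) ≥ b(π) − 1; (iii) for every revrev β, b(π·β) ≥ b(π) − 1. -/
import Mathlib


/-- The four kinds of rearrangement operations considered:
reversals, transpositions, inverse transpositions and revrevs. -/
inductive RearrOp : Type
  | rev
  | transp
  | invtransp
  | revrev
deriving DecidableEq

/-- `π` is (the extended version of) a signed permutation of size `n`:
`π 0 = +0`, `π (n+1) = +(n+1)`, and on positions `1, …, n` the values have pairwise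
distinct absolute values lying in `{1, …, n}`. -/
def IsSPerm (n : ℕ) (π : ℕ → ℤ) : Prop :=
  π 0 = 0 ∧ π (n + 1) = (n : ℤ) + 1 ∧
  (∀ i : ℕ, 1 ≤ i → i ≤ n → 1 ≤ |π i| ∧ |π i| ≤ (n : ℤ)) ∧
  (∀ i j : ℕ, 1 ≤ i → i ≤ n → 1 ≤ j → j ≤ n → |π i| = |π j| → i = j)

/-- `π` is (the extended version of) an unsigned permutation of size `n`. -/
def IsUPerm (n : ℕ) (π : ℕ → ℕ) : Prop :=
  π 0 = 0 ∧ π (n + 1) = n + 1 ∧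
  (∀ i : ℕ, 1 ≤ i → i ≤ n → 1 ≤ π i ∧ π i ≤ n) ∧
  (∀ i j : ℕ, 1 ≤ i → i ≤ n → 1 ≤ j → j ≤ n → π i = π j → i = j)

/-- Signed reversal `ρ(i,j)`, `1 ≤ i ≤ j ≤ n`: replaces `(π_i … π_j)` by `(−π_j … −π_i)`. -/
def SRev (n : ℕ) (π π' : ℕ → ℤ) : Prop :=
  ∃ i j : ℕ, 1 ≤ i ∧ i ≤ j ∧ j ≤ n ∧
    (∀ p : ℕ, i ≤ p → p ≤ j → π' p = - π (i + j - p)) ∧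
    (∀ p : ℕ, p < i ∨ j < p → π' p = π p)

/-- Transposition `τ(i,j,k)`, `1 ≤ i < j < k ≤ n+1`: exchanges the adjacent segments
`(π_i … π_{j−1})` and `(π_j … π_{k−1})`. -/
def STransp (n : ℕ) (π π' : ℕ → ℤ) : Prop :=
  ∃ i j k : ℕ, 1 ≤ i ∧ i < j ∧ j < k ∧ k ≤ n + 1 ∧
    (∀ p : ℕ, i ≤ p → p < i + (k - j) → π' p = π (p + (j - i))) ∧
    (∀ p : ℕ, i + (k - j) ≤ p → p < k → π' p = π (p - (k - j))) ∧
    (∀ p : ℕ, p < i ∨ k ≤ p → π' p = π p)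

/-- Signed inverse transposition (type 1 or type 2): exchanges the two adjacent segments
`(π_i … π_{j−1})` and `(π_j … π_{k−1})` and additionally reverses (and negates) one of them. -/
def SInvTransp (n : ℕ) (π π' : ℕ → ℤ) : Prop :=
  ∃ i j k : ℕ, 1 ≤ i ∧ i < j ∧ j < k ∧ k ≤ n + 1 ∧
    (((∀ p : ℕ, i ≤ p → p < i + (k - j) → π' p = π (p + (j - i))) ∧
      (∀ p : ℕ, i + (k - j) ≤ p → p < k → π' p = - π (i + k - 1 - p))) ∨
     ((∀ p : ℕ, i ≤ p → p < i + (k - j) → π' p = - π (i + k - 1 - p)) ∧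
      (∀ p : ℕ, i + (k - j) ≤ p → p < k → π' p = π (p - (k - j))))) ∧
    (∀ p : ℕ, p < i ∨ k ≤ p → π' p = π p)

/-- Signed revrev `ρρ(i,j,k)`: reverses (and negates) each of the two adjacent segments
`(π_i … π_{j−1})` and `(π_j … π_{k−1})` in place, without exchanging them. -/
def SRevRev (n : ℕ) (π π' : ℕ → ℤ) : Prop :=
  ∃ i j k : ℕ, 1 ≤ i ∧ i < j ∧ j < k ∧ k ≤ n + 1 ∧
    (∀ p : ℕ, i ≤ p → p < j → π' p = - π (i + j - 1 - p)) ∧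
    (∀ p : ℕ, j ≤ p → p < k → π' p = - π (j + k - 1 - p)) ∧
    (∀ p : ℕ, p < i ∨ k ≤ p → π' p = π p)

/-- Unsigned reversal `ρ(i,j)`. -/
def URev (n : ℕ) (π π' : ℕ → ℕ) : Prop :=
  ∃ i j : ℕ, 1 ≤ i ∧ i ≤ j ∧ j ≤ n ∧
    (∀ p : ℕ, i ≤ p → p ≤ j → π' p = π (i + j - p)) ∧
    (∀ p : ℕ, p < i ∨ j < p → π' p = π p)

/-- Unsigned transposition `τ(i,j,k)`. -/
def UTransp (n : ℕ) (π π' : ℕ → ℕ) : Prop :=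
  ∃ i j k : ℕ, 1 ≤ i ∧ i < j ∧ j < k ∧ k ≤ n + 1 ∧
    (∀ p : ℕ, i ≤ p → p < i + (k - j) → π' p = π (p + (j - i))) ∧
    (∀ p : ℕ, i + (k - j) ≤ p → p < k → π' p = π (p - (k - j))) ∧
    (∀ p : ℕ, p < i ∨ k ≤ p → π' p = π p)

/-- Unsigned inverse transposition (type 1 or type 2). -/
def UInvTransp (n : ℕ) (π π' : ℕ → ℕ) : Prop :=
  ∃ i j k : ℕ, 1 ≤ i ∧ i < j ∧ j < k ∧ k ≤ n + 1 ∧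
    (((∀ p : ℕ, i ≤ p → p < i + (k - j) → π' p = π (p + (j - i))) ∧
      (∀ p : ℕ, i + (k - j) ≤ p → p < k → π' p = π (i + k - 1 - p))) ∨
     ((∀ p : ℕ, i ≤ p → p < i + (k - j) → π' p = π (i + k - 1 - p)) ∧
      (∀ p : ℕ, i + (k - j) ≤ p → p < k → π' p = π (p - (k - j))))) ∧
    (∀ p : ℕ, p < i ∨ k ≤ p → π' p = π p)

/-- Unsigned revrev `ρρ(i,j,k)`. -/
def URevRev (n : ℕ) (π π' : ℕ → ℕ) : Prop :=
  ∃ i j k : ℕ, 1 ≤ i ∧ i < j ∧ j < k ∧ k ≤ n + 1 ∧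
    (∀ p : ℕ, i ≤ p → p < j → π' p = π (i + j - 1 - p)) ∧
    (∀ p : ℕ, j ≤ p → p < k → π' p = π (j + k - 1 - p)) ∧
    (∀ p : ℕ, p < i ∨ k ≤ p → π' p = π p)

def sOpRel (n : ℕ) : RearrOp → (ℕ → ℤ) → (ℕ → ℤ) → Prop
  | RearrOp.rev => SRev n
  | RearrOp.transp => STransp n
  | RearrOp.invtransp => SInvTransp n
  | RearrOp.revrev => SRevRev n

def uOpRel (n : ℕ) : RearrOp → (ℕ → ℕ) → (ℕ → ℕ) → Prop
  | RearrOp.rev => URev n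
  | RearrOp.transp => UTransp n
  | RearrOp.invtransp => UInvTransp n
  | RearrOp.revrev => URevRev n

/-- The list of operations `l` transforms the signed permutation `π` into the identity. -/
def SSorts (n : ℕ) : List RearrOp → (ℕ → ℤ) → Prop
  | [], π => ∀ p : ℕ, p ≤ n + 1 → π p = (p : ℤ)
  | op :: l, π => ∃ π' : ℕ → ℤ, sOpRel n op π π' ∧ SSorts n l π'

/-- The list of operations `l` transforms the unsigned permutation `π` into the identity. -/
def USorts (n : ℕ) : List RearrOp → (ℕ → ℕ) → Prop
  | [], π => ∀ p : ℕ, p ≤ n + 1 → π p = p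
  | op :: l, π => ∃ π' : ℕ → ℕ, uOpRel n op π π' ∧ USorts n l π'

/-- A sequence of `s` (unsigned) transpositions transforms `π` into the identity. -/
def UTranspSorts (n : ℕ) : ℕ → (ℕ → ℕ) → Prop
  | 0, π => ∀ p : ℕ, p ≤ n + 1 → π p = p
  | s + 1, π => ∃ π' : ℕ → ℕ, UTransp n π π' ∧ UTranspSorts n s π'

/-- The cost of an operation: `wr` for a reversal, `wt` for a transposition,
inverse transposition or revrev. -/
noncomputable def opCost (wr wt : ℝ) (op : RearrOp) : ENNReal :=
  if op = RearrOp.rev then ENNReal.ofReal wr else ENNReal.ofReal wt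

/-- The total cost of a sequence of operations. -/
noncomputable def seqCost (wr wt : ℝ) (l : List RearrOp) : ENNReal :=
  (l.map (opCost wr wt)).sum

/-- The weighted distance `d^w_M(π)` for a signed permutation `π`: the minimum total cost
of a sequence of operations from the model `M` transforming `π` into the identity
(`∞` if no such sequence exists). -/
noncomputable def sWDist (n : ℕ) (M : Set RearrOp) (wr wt : ℝ) (π : ℕ → ℤ) : ENNReal :=
  sInf {c : ENNReal |
    ∃ l : List RearrOp, (∀ op ∈ l, op ∈ M) ∧ SSorts n l π ∧ c = seqCost wr wt l}

/-- The weighted distance `d^w_M(π)` for an unsigned permutation `π`. -/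
noncomputable def uWDist (n : ℕ) (M : Set RearrOp) (wr wt : ℝ) (π : ℕ → ℕ) : ENNReal :=
  sInf {c : ENNReal |
    ∃ l : List RearrOp, (∀ op ∈ l, op ∈ M) ∧ USorts n l π ∧ c = seqCost wr wt l}

/-- `b(π)`: number of (signed) breakpoints of the signed permutation `π`. -/
def bS (n : ℕ) (π : ℕ → ℤ) : ℕ :=
  ((Finset.range (n + 1)).filter (fun i => π (i + 1) - π i ≠ 1)).card

/-- `b(π)`: number of unsigned-reversal breakpoints, i.e. pairs with `|π_{i+1} − π_i| ≠ 1`. -/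
def bU (n : ℕ) (π : ℕ → ℕ) : ℕ :=
  ((Finset.range (n + 1)).filter
    (fun i => ¬ (π (i + 1) = π i + 1 ∨ π i = π (i + 1) + 1))).card

/-- `b_τ(π)`: number of transposition breakpoints, i.e. pairs with `π_{i+1} − π_i ≠ 1`. -/
def bTU (n : ℕ) (π : ℕ → ℕ) : ℕ :=
  ((Finset.range (n + 1)).filter (fun i => π (i + 1) ≠ π i + 1)).card

def M1 : Set RearrOp := {RearrOp.transp, RearrOp.invtransp}
def M2 : Set RearrOp := {RearrOp.rev, RearrOp.transp, RearrOp.invtransp}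
def M3 : Set RearrOp := {RearrOp.transp, RearrOp.revrev}
def M4 : Set RearrOp := {RearrOp.rev, RearrOp.transp, RearrOp.revrev}
def M5 : Set RearrOp := {RearrOp.transp, RearrOp.invtransp, RearrOp.revrev}
def M6 : Set RearrOp := {RearrOp.rev, RearrOp.transp, RearrOp.invtransp, RearrOp.revrev}


def adjS (n : ℕ) (π : ℕ → ℤ) : Finset ℕ :=
  (Finset.range (n + 1)).filter (fun q => π (q + 1) - π q = 1)

lemma bS_add_adjS (n : ℕ) (π : ℕ → ℤ) : (adjS n π).card + bS n π = n + 1 := by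
  classical
  have := Finset.card_filter_add_card_filter_not
    (s := Finset.range (n+1)) (p := fun q => π (q + 1) - π q = 1)
  simpa [adjS, bS, Ne, Finset.card_range] using this

lemma bS_le_of_adj (n : ℕ) (π π' : ℕ → ℤ) (c : ℕ)
    (h : (adjS n π').card ≤ (adjS n π).card + c) : bS n π ≤ bS n π' + c := by
  have h1 := bS_add_adjS n π
  have h2 := bS_add_adjS n π'
  omega

lemma adj_card_le_insert (n : ℕ) (π π' : ℕ → ℤ) (f : ℕ → ℕ) (e : ℕ)
    (hmem : ∀ q ∈ adjS n π', f q ∈ insert e (adjS n π))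
    (hinj : Set.InjOn f (adjS n π' : Set ℕ)) :
    (adjS n π').card ≤ (adjS n π).card + 1 := by
  calc (adjS n π').card ≤ (insert e (adjS n π)).card :=
        Finset.card_le_card_of_injOn f hmem hinj
    _ ≤ (adjS n π).card + 1 := Finset.card_insert_le _ _

/-- Let `π` be a signed permutation all of whose strips are positive
(equivalently, all elements of `π` have sign `+`). Then: (i) for every reversal `ρ`,
`b(π·ρ) ≥ b(π)`; (ii) for every inverse transposition `β`, `b(π·β) ≥ b(π) − 1`;
(iii) for every revrev `β`, `b(π·β) ≥ b(π) − 1`. -/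
theorem signed_positive_strips_breakpoint_variation
    (n : ℕ) (π : ℕ → ℤ) (hπ : IsSPerm n π)
    (hpos : ∀ i : ℕ, 1 ≤ i → i ≤ n → 0 < π i) :
    (∀ π' : ℕ → ℤ, SRev n π π' → bS n π ≤ bS n π') ∧
    (∀ π' : ℕ → ℤ, SInvTransp n π π' → bS n π ≤ bS n π' + 1) ∧
    (∀ π' : ℕ → ℤ, SRevRev n π π' → bS n π ≤ bS n π' + 1) := by
  obtain ⟨h0, hn1, -, -⟩ := hπ
  have hP : ∀ p, p ≤ n + 1 → 0 ≤ π p := by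
    intro p hp
    rcases Nat.eq_zero_or_pos p with h | h
    · rw [h, h0]
    rcases Nat.lt_or_ge p (n + 1) with h' | h'
    · exact (hpos p h (by omega)).le
    · have hp' : p = n + 1 := by omega
      rw [hp', hn1]
      positivity
  have hP1 : ∀ p, 1 ≤ p → p ≤ n + 1 → 1 ≤ π p := by
    intro p hp hp'
    rcases Nat.lt_or_ge p (n + 1) with h' | h'
    · exact hpos p hp (by omega)
    · have hp'' : p = n + 1 := by omega
      rw [hp'', hn1]
      have := Int.natCast_nonneg n
      linarith
  refine ⟨?_, ?_, ?_⟩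
  -- Part (i): reversals
  · rintro π' ⟨i, j, hi1, hij, hjn, hin, hout⟩
    set f : ℕ → ℕ := fun q => if i ≤ q ∧ q + 1 ≤ j then i + j - 1 - q else q with hf
    have hclass : ∀ q, q < n + 1 → π' (q + 1) - π' q = 1 →
        ((q + 2 ≤ i ∨ (i ≤ q ∧ q + 1 ≤ j) ∨ j + 1 ≤ q) ∧
         f q < n + 1 ∧ π (f q + 1) - π (f q) = 1) := by
      intro q hq hadj
      have hcase : q + 2 ≤ i ∨ q + 1 = i ∨ (i ≤ q ∧ q + 1 ≤ j) ∨ q = j ∨ j + 1 ≤ q := by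
        omega
      rcases hcase with h | h | h | h | h
      · have e1 : π' q = π q := hout q (Or.inl (by omega))
        have e2 : π' (q + 1) = π (q + 1) := hout (q + 1) (Or.inl (by omega))
        have hfq : f q = q := by simp only [hf]; rw [if_neg (by omega)]
        rw [e1, e2] at hadj
        rw [hfq]
        exact ⟨Or.inl h, by omega, hadj⟩
      · exfalso
        have e1 : π' q = π q := hout q (Or.inl (by omega))
        have e2 : π' (q + 1) = -π (i + j - (q + 1)) := hin (q + 1) (by omega) (by omega)
        rw [show i + j - (q + 1) = j from by omega] at e2
        have g1 : 1 ≤ π j := hP1 j (by omega) (by omega)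
        have g2 : 0 ≤ π q := hP q (by omega)
        rw [e1, e2] at hadj
        omega
      · have hfq : f q = i + j - 1 - q := by simp only [hf]; rw [if_pos h]
        have e1 : π' q = -π (i + j - q) := hin q h.1 (by omega)
        have e2 : π' (q + 1) = -π (i + j - (q + 1)) := hin (q + 1) (by omega) (by omega)
        rw [show i + j - q = f q + 1 from by omega] at e1
        rw [show i + j - (q + 1) = f q from by omega] at e2
        rw [e1, e2] at hadj
        exact ⟨Or.inr (Or.inl h), by omega, by omega⟩
      · exfalso
        have e1 : π' q = -π (i + j - q) := hin q (by omega) (by omega)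
        rw [show i + j - q = i from by omega] at e1
        have e2 : π' (q + 1) = π (q + 1) := hout (q + 1) (Or.inr (by omega))
        have g1 : 1 ≤ π i := hP1 i (by omega) (by omega)
        have g2 : 1 ≤ π (q + 1) := hP1 (q + 1) (by omega) (by omega)
        rw [e1, e2] at hadj
        omega
      · have e1 : π' q = π q := hout q (Or.inr (by omega))
        have e2 : π' (q + 1) = π (q + 1) := hout (q + 1) (Or.inr (by omega))
        have hfq : f q = q := by simp only [hf]; rw [if_neg (by omega)]
        rw [e1, e2] at hadj
        rw [hfq]
        exact ⟨Or.inr (Or.inr h), by omega, hadj⟩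
    have hmem : ∀ q ∈ adjS n π', f q ∈ adjS n π := by
      intro q hq
      simp only [adjS, Finset.mem_filter, Finset.mem_range] at hq ⊢
      exact ⟨(hclass q hq.1 hq.2).2.1, (hclass q hq.1 hq.2).2.2⟩
    have hinj : Set.InjOn f (adjS n π' : Set ℕ) := by
      intro q1 hq1 q2 hq2 heq
      simp only [adjS, Finset.coe_filter, Set.mem_setOf_eq, Finset.mem_range] at hq1 hq2
      have r1 := (hclass q1 hq1.1 hq1.2).1
      have r2 := (hclass q2 hq2.1 hq2.2).1
      simp only [hf] at heq
      split_ifs at heq <;> omega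
    have hle := Finset.card_le_card_of_injOn f hmem hinj
    simpa using bS_le_of_adj n π π' 0 (by omega)
  -- Part (ii): inverse transpositions
  · rintro π' ⟨i, j, k, hi1, hij, hjk, hkn, hmid, hout⟩
    set m := i + (k - j) with hm
    have him : i < m := by omega
    have hmk : m < k := by omega
    rcases hmid with ⟨ha, hb⟩ | ⟨ha, hb⟩
    -- Type 1
    · set f : ℕ → ℕ := fun q =>
        if i ≤ q ∧ q + 2 ≤ m then q + (j - i)
        else if m ≤ q ∧ q + 2 ≤ k then i + k - 2 - q
        else q with hf
      have hclass : ∀ q, q < n + 1 → π' (q + 1) - π' q = 1 →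
          ((q + 2 ≤ i ∨ q + 1 = i ∨ (i ≤ q ∧ q + 2 ≤ m) ∨ (m ≤ q ∧ q + 2 ≤ k) ∨ k ≤ q) ∧
           (f q = i - 1 ∨ (f q < n + 1 ∧ π (f q + 1) - π (f q) = 1))) := by
        intro q hq hadj
        have hcase : q + 2 ≤ i ∨ q + 1 = i ∨ (i ≤ q ∧ q + 2 ≤ m) ∨ q + 1 = m ∨
            (m ≤ q ∧ q + 2 ≤ k) ∨ q + 1 = k ∨ k ≤ q := by omega
        rcases hcase with h | h | h | h | h | h | h
        · have e1 : π' q = π q := hout q (Or.inl (by omega))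
          have e2 : π' (q + 1) = π (q + 1) := hout (q + 1) (Or.inl (by omega))
          have hfq : f q = q := by simp only [hf]; rw [if_neg (by omega), if_neg (by omega)]
          rw [e1, e2] at hadj
          rw [hfq]
          exact ⟨Or.inl h, Or.inr ⟨by omega, hadj⟩⟩
        · have hfq : f q = q := by simp only [hf]; rw [if_neg (by omega), if_neg (by omega)]
          exact ⟨Or.inr (Or.inl h), Or.inl (by omega)⟩
        · have hfq : f q = q + (j - i) := by simp only [hf]; rw [if_pos h]
          have e1 : π' q = π (q + (j - i)) := ha q h.1 (by omega)
          have e2 : π' (q + 1) = π (q + 1 + (j - i)) := ha (q + 1) (by omega) (by omega)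
          rw [show q + (j - i) = f q from by omega] at e1
          rw [show q + 1 + (j - i) = f q + 1 from by omega] at e2
          rw [e1, e2] at hadj
          exact ⟨Or.inr (Or.inr (Or.inl h)), Or.inr ⟨by omega, hadj⟩⟩
        · exfalso
          have e1 : π' q = π (q + (j - i)) := ha q (by omega) (by omega)
          rw [show q + (j - i) = k - 1 from by omega] at e1
          have e2 : π' (q + 1) = -π (i + k - 1 - (q + 1)) := hb (q + 1) (by omega) (by omega)
          rw [show i + k - 1 - (q + 1) = j - 1 from by omega] at e2
          have g1 : 1 ≤ π (j - 1) := hP1 (j - 1) (by omega) (by omega)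
          have g2 : 1 ≤ π (k - 1) := hP1 (k - 1) (by omega) (by omega)
          rw [e1, e2] at hadj
          omega
        · have hfq : f q = i + k - 2 - q := by
            simp only [hf]; rw [if_neg (by omega), if_pos h]
          have e1 : π' q = -π (i + k - 1 - q) := hb q h.1 (by omega)
          have e2 : π' (q + 1) = -π (i + k - 1 - (q + 1)) := hb (q + 1) (by omega) (by omega)
          rw [show i + k - 1 - q = f q + 1 from by omega] at e1
          rw [show i + k - 1 - (q + 1) = f q from by omega] at e2
          rw [e1, e2] at hadj
          exact ⟨Or.inr (Or.inr (Or.inr (Or.inl h))), Or.inr ⟨by omega, by omega⟩⟩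
        · exfalso
          have e1 : π' q = -π (i + k - 1 - q) := hb q (by omega) (by omega)
          rw [show i + k - 1 - q = i from by omega] at e1
          have e2 : π' (q + 1) = π (q + 1) := hout (q + 1) (Or.inr (by omega))
          have g1 : 1 ≤ π i := hP1 i (by omega) (by omega)
          have g2 : 1 ≤ π (q + 1) := hP1 (q + 1) (by omega) (by omega)
          rw [e1, e2] at hadj
          omega
        · have e1 : π' q = π q := hout q (Or.inr (by omega))
          have e2 : π' (q + 1) = π (q + 1) := hout (q + 1) (Or.inr (by omega))
          have hfq : f q = q := by simp only [hf]; rw [if_neg (by omega), if_neg (by omega)]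
          rw [e1, e2] at hadj
          rw [hfq]
          exact ⟨Or.inr (Or.inr (Or.inr (Or.inr h))), Or.inr ⟨by omega, hadj⟩⟩
      have hmem : ∀ q ∈ adjS n π', f q ∈ insert (i - 1) (adjS n π) := by
        intro q hq
        simp only [adjS, Finset.mem_filter, Finset.mem_range] at hq
        rcases (hclass q hq.1 hq.2).2 with h | h
        · rw [h]; exact Finset.mem_insert_self _ _
        · exact Finset.mem_insert_of_mem
            (by simp only [adjS, Finset.mem_filter, Finset.mem_range]; exact h)
      have hinj : Set.InjOn f (adjS n π' : Set ℕ) := by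
        intro q1 hq1 q2 hq2 heq
        simp only [adjS, Finset.coe_filter, Set.mem_setOf_eq, Finset.mem_range] at hq1 hq2
        have r1 := (hclass q1 hq1.1 hq1.2).1
        have r2 := (hclass q2 hq2.1 hq2.2).1
        simp only [hf] at heq
        split_ifs at heq <;> omega
      exact bS_le_of_adj n π π' 1 (adj_card_le_insert n π π' f (i - 1) hmem hinj)
    -- Type 2
    · set f : ℕ → ℕ := fun q =>
        if i ≤ q ∧ q + 2 ≤ m then i + k - 2 - q
        else if m ≤ q ∧ q + 2 ≤ k then q - (k - j)
        else q with hf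
      have hclass : ∀ q, q < n + 1 → π' (q + 1) - π' q = 1 →
          ((q + 2 ≤ i ∨ (i ≤ q ∧ q + 2 ≤ m) ∨ (m ≤ q ∧ q + 2 ≤ k) ∨ q + 1 = k ∨ k ≤ q) ∧
           (f q = k - 1 ∨ (f q < n + 1 ∧ π (f q + 1) - π (f q) = 1))) := by
        intro q hq hadj
        have hcase : q + 2 ≤ i ∨ q + 1 = i ∨ (i ≤ q ∧ q + 2 ≤ m) ∨ q + 1 = m ∨
            (m ≤ q ∧ q + 2 ≤ k) ∨ q + 1 = k ∨ k ≤ q := by omega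
        rcases hcase with h | h | h | h | h | h | h
        · have e1 : π' q = π q := hout q (Or.inl (by omega))
          have e2 : π' (q + 1) = π (q + 1) := hout (q + 1) (Or.inl (by omega))
          have hfq : f q = q := by simp only [hf]; rw [if_neg (by omega), if_neg (by omega)]
          rw [e1, e2] at hadj
          rw [hfq]
          exact ⟨Or.inl h, Or.inr ⟨by omega, hadj⟩⟩
        · exfalso
          have e1 : π' q = π q := hout q (Or.inl (by omega))
          have e2 : π' (q + 1) = -π (i + k - 1 - (q + 1)) := ha (q + 1) (by omega) (by omega)
          rw [show i + k - 1 - (q + 1) = k - 1 from by omega] at e2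
          have g1 : 1 ≤ π (k - 1) := hP1 (k - 1) (by omega) (by omega)
          have g2 : 0 ≤ π q := hP q (by omega)
          rw [e1, e2] at hadj
          omega
        · have hfq : f q = i + k - 2 - q := by simp only [hf]; rw [if_pos h]
          have e1 : π' q = -π (i + k - 1 - q) := ha q h.1 (by omega)
          have e2 : π' (q + 1) = -π (i + k - 1 - (q + 1)) := ha (q + 1) (by omega) (by omega)
          rw [show i + k - 1 - q = f q + 1 from by omega] at e1
          rw [show i + k - 1 - (q + 1) = f q from by omega] at e2
          rw [e1, e2] at hadj
          exact ⟨Or.inr (Or.inl h), Or.inr ⟨by omega, by omega⟩⟩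
        · exfalso
          have e1 : π' q = -π (i + k - 1 - q) := ha q (by omega) (by omega)
          rw [show i + k - 1 - q = j from by omega] at e1
          have e2 : π' (q + 1) = π (q + 1 - (k - j)) := hb (q + 1) (by omega) (by omega)
          rw [show q + 1 - (k - j) = i from by omega] at e2
          have g1 : 1 ≤ π j := hP1 j (by omega) (by omega)
          have g2 : 1 ≤ π i := hP1 i (by omega) (by omega)
          rw [e1, e2] at hadj
          omega
        · have hfq : f q = q - (k - j) := by
            simp only [hf]; rw [if_neg (by omega), if_pos h]
          have e1 : π' q = π (q - (k - j)) := hb q h.1 (by omega)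
          have e2 : π' (q + 1) = π (q + 1 - (k - j)) := hb (q + 1) (by omega) (by omega)
          rw [show q - (k - j) = f q from by omega] at e1
          rw [show q + 1 - (k - j) = f q + 1 from by omega] at e2
          rw [e1, e2] at hadj
          exact ⟨Or.inr (Or.inr (Or.inl h)), Or.inr ⟨by omega, hadj⟩⟩
        · have hfq : f q = q := by simp only [hf]; rw [if_neg (by omega), if_neg (by omega)]
          exact ⟨Or.inr (Or.inr (Or.inr (Or.inl h))), Or.inl (by omega)⟩
        · have e1 : π' q = π q := hout q (Or.inr (by omega))
          have e2 : π' (q + 1) = π (q + 1) := hout (q + 1) (Or.inr (by omega))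
          have hfq : f q = q := by simp only [hf]; rw [if_neg (by omega), if_neg (by omega)]
          rw [e1, e2] at hadj
          rw [hfq]
          exact ⟨Or.inr (Or.inr (Or.inr (Or.inr h))), Or.inr ⟨by omega, hadj⟩⟩
      have hmem : ∀ q ∈ adjS n π', f q ∈ insert (k - 1) (adjS n π) := by
        intro q hq
        simp only [adjS, Finset.mem_filter, Finset.mem_range] at hq
        rcases (hclass q hq.1 hq.2).2 with h | h
        · rw [h]; exact Finset.mem_insert_self _ _
        · exact Finset.mem_insert_of_mem
            (by simp only [adjS, Finset.mem_filter, Finset.mem_range]; exact h)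
      have hinj : Set.InjOn f (adjS n π' : Set ℕ) := by
        intro q1 hq1 q2 hq2 heq
        simp only [adjS, Finset.coe_filter, Set.mem_setOf_eq, Finset.mem_range] at hq1 hq2
        have r1 := (hclass q1 hq1.1 hq1.2).1
        have r2 := (hclass q2 hq2.1 hq2.2).1
        simp only [hf] at heq
        split_ifs at heq <;> omega
      exact bS_le_of_adj n π π' 1 (adj_card_le_insert n π π' f (k - 1) hmem hinj)
  -- Part (iii): revrevs
  · rintro π' ⟨i, j, k, hi1, hij, hjk, hkn, ha, hb, hout⟩
    set f : ℕ → ℕ := fun q =>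
      if i ≤ q ∧ q + 2 ≤ j then i + j - 2 - q
      else if j ≤ q ∧ q + 2 ≤ k then j + k - 2 - q
      else q with hf
    have hclass : ∀ q, q < n + 1 → π' (q + 1) - π' q = 1 →
        ((q + 2 ≤ i ∨ (i ≤ q ∧ q + 2 ≤ j) ∨ q + 1 = j ∨ (j ≤ q ∧ q + 2 ≤ k) ∨ k ≤ q) ∧
         (f q = j - 1 ∨ (f q < n + 1 ∧ π (f q + 1) - π (f q) = 1))) := by
      intro q hq hadj
      have hcase : q + 2 ≤ i ∨ q + 1 = i ∨ (i ≤ q ∧ q + 2 ≤ j) ∨ q + 1 = j ∨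
          (j ≤ q ∧ q + 2 ≤ k) ∨ q + 1 = k ∨ k ≤ q := by omega
      rcases hcase with h | h | h | h | h | h | h
      · have e1 : π' q = π q := hout q (Or.inl (by omega))
        have e2 : π' (q + 1) = π (q + 1) := hout (q + 1) (Or.inl (by omega))
        have hfq : f q = q := by simp only [hf]; rw [if_neg (by omega), if_neg (by omega)]
        rw [e1, e2] at hadj
        rw [hfq]
        exact ⟨Or.inl h, Or.inr ⟨by omega, hadj⟩⟩
      · exfalso
        have e1 : π' q = π q := hout q (Or.inl (by omega))
        have e2 : π' (q + 1) = -π (i + j - 1 - (q + 1)) := ha (q + 1) (by omega) (by omega)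
        rw [show i + j - 1 - (q + 1) = j - 1 from by omega] at e2
        have g1 : 1 ≤ π (j - 1) := hP1 (j - 1) (by omega) (by omega)
        have g2 : 0 ≤ π q := hP q (by omega)
        rw [e1, e2] at hadj
        omega
      · have hfq : f q = i + j - 2 - q := by simp only [hf]; rw [if_pos h]
        have e1 : π' q = -π (i + j - 1 - q) := ha q h.1 (by omega)
        have e2 : π' (q + 1) = -π (i + j - 1 - (q + 1)) := ha (q + 1) (by omega) (by omega)
        rw [show i + j - 1 - q = f q + 1 from by omega] at e1
        rw [show i + j - 1 - (q + 1) = f q from by omega] at e2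
        rw [e1, e2] at hadj
        exact ⟨Or.inr (Or.inl h), Or.inr ⟨by omega, by omega⟩⟩
      · have hfq : f q = q := by simp only [hf]; rw [if_neg (by omega), if_neg (by omega)]
        exact ⟨Or.inr (Or.inr (Or.inl h)), Or.inl (by omega)⟩
      · have hfq : f q = j + k - 2 - q := by
          simp only [hf]; rw [if_neg (by omega), if_pos h]
        have e1 : π' q = -π (j + k - 1 - q) := hb q h.1 (by omega)
        have e2 : π' (q + 1) = -π (j + k - 1 - (q + 1)) := hb (q + 1) (by omega) (by omega)
        rw [show j + k - 1 - q = f q + 1 from by omega] at e1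
        rw [show j + k - 1 - (q + 1) = f q from by omega] at e2
        rw [e1, e2] at hadj
        exact ⟨Or.inr (Or.inr (Or.inr (Or.inl h))), Or.inr ⟨by omega, by omega⟩⟩
      · exfalso
        have e1 : π' q = -π (j + k - 1 - q) := hb q (by omega) (by omega)
        rw [show j + k - 1 - q = j from by omega] at e1
        have e2 : π' (q + 1) = π (q + 1) := hout (q + 1) (Or.inr (by omega))
        have g1 : 1 ≤ π j := hP1 j (by omega) (by omega)
        have g2 : 1 ≤ π (q + 1) := hP1 (q + 1) (by omega) (by omega)
        rw [e1, e2] at hadj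
        omega
      · have e1 : π' q = π q := hout q (Or.inr (by omega))
        have e2 : π' (q + 1) = π (q + 1) := hout (q + 1) (Or.inr (by omega))
        have hfq : f q = q := by simp only [hf]; rw [if_neg (by omega), if_neg (by omega)]
        rw [e1, e2] at hadj
        rw [hfq]
        exact ⟨Or.inr (Or.inr (Or.inr (Or.inr h))), Or.inr ⟨by omega, hadj⟩⟩
    have hmem : ∀ q ∈ adjS n π', f q ∈ insert (j - 1) (adjS n π) := by
      intro q hq
      simp only [adjS, Finset.mem_filter, Finset.mem_range] at hq
      rcases (hclass q hq.1 hq.2).2 with h | h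
      · rw [h]; exact Finset.mem_insert_self _ _
      · exact Finset.mem_insert_of_mem
          (by simp only [adjS, Finset.mem_filter, Finset.mem_range]; exact h)
    have hinj : Set.InjOn f (adjS n π' : Set ℕ) := by
      intro q1 hq1 q2 hq2 heq
      simp only [adjS, Finset.coe_filter, Set.mem_setOf_eq, Finset.mem_range] at hq1 hq2
      have r1 := (hclass q1 hq1.1 hq1.2).1
      have r2 := (hclass q2 hq2.1 hq2.2).1
      simp only [hf] at heq
      split_ifs at heq <;> omega
    exact bS_le_of_adj n π π' 1 (adj_card_le_insert n π π' f (j - 1) hmem hinj)
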